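/- Let (u,p) ∈ K × Q solve the continuous Biot contact problem and let (u_N, p_M) ∈ K_N × W solve the discrete Biot contact problem. Then for all v ∈ K, all v_N ∈ K_N and all q_M ∈ W, ‖u − u_N‖_H² ≤ 42‖u − v_N‖_H² + 12‖p − q_M‖_Q² + 4⟨Du − l, (v_N − u) + (v − u_N)⟩_H, where D = id_H + B†∘B and l = f_e − B† f_f. (The last term equals the contact-pressure duality term ⟨σ_n(u,p), (v_N − u + v − u_N)·n⟩ on the contact boundary in the concrete Biot setting.) -/
import Mathlib


open scoped RealInnerProductSpace

set_option maxHeartbeats 1600000 in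
/-- A priori error estimate for the displacement:
`‖u − u_N‖² ≤ 42‖u − v_N‖² + 12‖p − q_M‖² + 4⟨Du − l, (v_N − u) + (v − u_N)⟩`
for all `v ∈ K`, `v_N ∈ K_N`, `q_M ∈ W`, with `D = id + B†∘B`, `l = f_e − B† f_f`. -/
theorem stmt_14 {H Q : Type*}
    [NormedAddCommGroup H] [InnerProductSpace ℝ H] [CompleteSpace H]
    [NormedAddCommGroup Q] [InnerProductSpace ℝ Q] [CompleteSpace Q]
    (B : H →L[ℝ] Q) (hB : ‖B‖ ≤ 1)
    (K : Set H) (hK_ne : K.Nonempty) (hK_cl : IsClosed K) (hK_cv : Convex ℝ K)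
    (V_N : Submodule ℝ H) (hVN : FiniteDimensional ℝ V_N)
    (K_N : Set H) (hKN_sub : K_N ⊆ (V_N : Set H))
    (hKN_ne : K_N.Nonempty) (hKN_cl : IsClosed K_N) (hKN_cv : Convex ℝ K_N)
    (W : Submodule ℝ Q) (hW : FiniteDimensional ℝ W)
    (f_e : H) (f_f : Q)
    (D : H →L[ℝ] H) (l : H)
    (hD : D = ContinuousLinearMap.id ℝ H + (ContinuousLinearMap.adjoint B).comp B)
    (hl : l = f_e - ContinuousLinearMap.adjoint B f_f)
    (u : H) (p : Q) (hu : u ∈ K)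
    (hVI : ∀ v ∈ K, ⟪u, v - u⟫ - ⟪p, B (v - u)⟫ ≥ ⟪f_e, v - u⟫)
    (hEq : ∀ q : Q, -⟪B u, q⟫ - ⟪p, q⟫ = ⟪f_f, q⟫)
    (u_N : H) (p_M : Q) (huN : u_N ∈ K_N) (hpM : p_M ∈ W)
    (hVIN : ∀ v_N ∈ K_N, ⟪u_N, v_N - u_N⟫ - ⟪p_M, B (v_N - u_N)⟫ ≥ ⟪f_e, v_N - u_N⟫)
    (hEqN : ∀ q ∈ W, -⟪B u_N, q⟫ - ⟪p_M, q⟫ = ⟪f_f, q⟫) :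
    ∀ v ∈ K, ∀ v_N ∈ K_N, ∀ q_M ∈ W,
      ‖u - u_N‖ ^ 2 ≤ 42 * ‖u - v_N‖ ^ 2 + 12 * ‖p - q_M‖ ^ 2 +
        4 * ⟪D u - l, (v_N - u) + (v - u_N)⟫ := by
  intro v hv v_N hvN q_M hqM
  set B' := ContinuousLinearMap.adjoint B with hB'
  -- p = -(B u) - f_f
  have h3 : B u + p + f_f = 0 := by
    have h := hEq (B u + p + f_f)
    have h0 : ⟪B u + p + f_f, B u + p + f_f⟫ = 0 := by
      simp only [inner_add_left]; linarith
    exact inner_self_eq_zero.mp h0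
  have hB3 : B' (B u) + B' p + B' f_f = 0 := by
    have := congrArg B' h3
    simpa [map_add] using this
  set g : H := f_e + B' p with hg
  set gN : H := f_e + B' p_M with hgN
  have hDul : D u - l = u - g := by
    rw [hD, hl, hg]
    have hbp : B' p = -(B' (B u)) - B' f_f := by
      rw [eq_sub_iff_add_eq, eq_neg_iff_add_eq_zero]
      linear_combination (norm := abel) hB3
    simp only [ContinuousLinearMap.add_apply, ContinuousLinearMap.comp_apply,
      ContinuousLinearMap.id_apply]
    rw [hbp]; abel
  -- variational inequalities in operator form
  have T1 : (0:ℝ) ≤ ⟪u - g, v - u⟫ := by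
    have h := hVI v hv
    simp only [hg, hB', inner_sub_left, inner_add_left, ContinuousLinearMap.adjoint_inner_left]
    linarith
  have T2 : (0:ℝ) ≤ ⟪u_N - gN, v_N - u_N⟫ := by
    have h := hVIN v_N hvN
    simp only [hgN, hB', inner_sub_left, inner_add_left, ContinuousLinearMap.adjoint_inner_left]
    linarith
  -- discrete/continuous equation consistency
  have h4 : ∀ q ∈ W, ⟪B u - B u_N, q⟫ = ⟪p_M - p, q⟫ := by
    intro q hq
    have h1 := hEq q
    have h2 := hEqN q hq
    simp only [inner_sub_left]
    linarith
  -- key identity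
  have KEY : ‖u - u_N‖^2 + ⟪u - g, v - u⟫ + ⟪u_N - gN, v_N - u_N⟫
      = ⟪u - u_N, u - v_N⟫ + ⟪u - g, (v - u_N) + (v_N - u)⟫ + ⟪g - gN, v_N - u_N⟫ := by
    have hn : ‖u - u_N‖^2 = ⟪u - u_N, u - u_N⟫ := (real_inner_self_eq_norm_sq _).symm
    rw [hn]
    simp only [inner_sub_left, inner_sub_right, inner_add_right]
    linarith [real_inner_comm u u_N, real_inner_comm u v, real_inner_comm u v_N,
      real_inner_comm u g, real_inner_comm u gN, real_inner_comm u_N v,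
      real_inner_comm u_N v_N, real_inner_comm u_N g, real_inner_comm u_N gN,
      real_inner_comm v v_N, real_inner_comm v g, real_inner_comm v gN,
      real_inner_comm v_N g, real_inner_comm v_N gN, real_inner_comm g gN]
  have hggN : g - gN = B' (p - p_M) := by
    rw [hg, hgN, map_sub]; abel
  have hPid : ⟪g - gN, v_N - u_N⟫ = ⟪p - p_M, B v_N - B u_N⟫ := by
    rw [hggN, hB', ContinuousLinearMap.adjoint_inner_left, map_sub]
  -- scalar abbreviations
  set E := ‖u - u_N‖ with hE
  set A := ‖u - v_N‖ with hA
  set b := ‖p - q_M‖ with hb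
  set C := ‖q_M - p_M‖ with hC
  have hE0 : 0 ≤ E := norm_nonneg _
  have hA0 : 0 ≤ A := norm_nonneg _
  have hb0 : 0 ≤ b := norm_nonneg _
  have hC0 : 0 ≤ C := norm_nonneg _
  -- bound on ‖B x‖
  have hBle : ∀ x : H, ‖B x‖ ≤ ‖x‖ := by
    intro x
    calc ‖B x‖ ≤ ‖B‖ * ‖x‖ := B.le_opNorm x
    _ ≤ 1 * ‖x‖ := by nlinarith [norm_nonneg x]
    _ = ‖x‖ := one_mul _
  have hBvNu : ‖B v_N - B u‖ ≤ A := by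
    rw [← map_sub]
    calc ‖B (v_N - u)‖ ≤ ‖v_N - u‖ := hBle _
    _ = A := by rw [hA, norm_sub_rev]
  have hBvNuN : ‖B v_N - B u_N‖ ≤ A + E := by
    rw [← map_sub]
    calc ‖B (v_N - u_N)‖ ≤ ‖v_N - u_N‖ := hBle _
    _ = ‖(v_N - u) + (u - u_N)‖ := by abel_nf
    _ ≤ ‖v_N - u‖ + ‖u - u_N‖ := norm_add_le _ _
    _ = A + E := by rw [hA, norm_sub_rev]
  -- pressure term bound
  have hsplit : ⟪p - p_M, B v_N - B u_N⟫ = ⟪p - q_M, B v_N - B u_N⟫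
      + ⟪q_M - p_M, B v_N - B u⟫ + ⟪q_M - p_M, B u - B u_N⟫ := by
    simp only [inner_sub_left, inner_sub_right]
    ring
  have h4' : ⟪q_M - p_M, B u - B u_N⟫ = -⟪p - q_M, q_M - p_M⟫ - C^2 := by
    have hmem : q_M - p_M ∈ W := Submodule.sub_mem W hqM hpM
    have := h4 (q_M - p_M) hmem
    have hCsq : ⟪q_M - p_M, q_M - p_M⟫ = C^2 := by
      rw [hC]; exact real_inner_self_eq_norm_sq _
    have hcomm := real_inner_comm (B u - B u_N) (q_M - p_M)
    simp only [inner_sub_left] at this hcomm hCsq ⊢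
    linarith
  have b1 : ⟪p - q_M, B v_N - B u_N⟫ ≤ b * (A + E) := by
    calc ⟪p - q_M, B v_N - B u_N⟫ ≤ ‖p - q_M‖ * ‖B v_N - B u_N‖ := real_inner_le_norm _ _
    _ ≤ b * (A + E) := by
        rw [← hb]
        exact mul_le_mul_of_nonneg_left hBvNuN hb0
  have b2 : ⟪q_M - p_M, B v_N - B u⟫ ≤ C * A := by
    calc ⟪q_M - p_M, B v_N - B u⟫ ≤ ‖q_M - p_M‖ * ‖B v_N - B u‖ := real_inner_le_norm _ _
    _ ≤ C * A := by rw [← hC]; exact mul_le_mul_of_nonneg_left hBvNu hC0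
  have b3 : -⟪p - q_M, q_M - p_M⟫ ≤ b * C := by
    have := real_inner_le_norm (q_M - p) (q_M - p_M)
    have hcomm : ⟪q_M - p, q_M - p_M⟫ = -⟪p - q_M, q_M - p_M⟫ := by
      simp only [inner_sub_left]; ring
    rw [hcomm] at this
    calc -⟪p - q_M, q_M - p_M⟫ ≤ ‖q_M - p‖ * ‖q_M - p_M‖ := this
    _ = b * C := by rw [hb, hC, norm_sub_rev]
  have cs1 : ⟪u - u_N, u - v_N⟫ ≤ E * A := by
    calc ⟪u - u_N, u - v_N⟫ ≤ ‖u - u_N‖ * ‖u - v_N‖ := real_inner_le_norm _ _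
    _ = E * A := rfl
  -- combine
  have hP : ⟪g - gN, v_N - u_N⟫ ≤ b * (A + E) + C * A + b * C - C^2 := by
    rw [hPid, hsplit, h4']
    linarith
  have hS : ⟪u - g, (v - u_N) + (v_N - u)⟫ = ⟪D u - l, (v_N - u) + (v - u_N)⟫ := by
    rw [hDul]; rw [add_comm (v - u_N)]
  set S := ⟪D u - l, (v_N - u) + (v - u_N)⟫ with hSdef
  have main : E^2 ≤ S + E * A + b * (A + E) + C * A + b * C - C^2 := by
    rw [← hS]
    linarith [KEY, T1, T2, hP, cs1]
  have q1 : 4*(E*A) ≤ E^2 + 4*A^2 := by nlinarith [sq_nonneg (E - 2*A)]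
  have q2 : 4*(b*E) ≤ E^2 + 4*b^2 := by nlinarith [sq_nonneg (E - 2*b)]
  have q3 : 4*(C*A) ≤ 2*C^2 + 2*A^2 := by nlinarith [sq_nonneg (C - A)]
  have q4 : 4*(b*C) ≤ 2*C^2 + 2*b^2 := by nlinarith [sq_nonneg (C - b)]
  have q5 : 4*(b*A) ≤ 2*b^2 + 2*A^2 := by nlinarith [sq_nonneg (b - A)]
  have hbAE : b*(A+E) = b*A + b*E := by ring
  rw [hbAE] at main
  linarith [main, q1, q2, q3, q4, q5, sq_nonneg E, sq_nonneg A, sq_nonneg b]
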